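/- Let {q_1,...,q_d} be linearly independent vectors in R^d with ||q_i|| <= R, Q = Σ_i q_i q_i^T, and let f in R^d with |q_i^T f| <= LR for each i. Define, for γ in (0,1], the random vector g which with probability γ/d (for each i) equals (d/γ)(q_i^T f) Q^{-1} q_i, and equals 0 with probability 1-γ. Then E[g] = f and E[g^T Q g] <= L² R² d² / γ. -/

import Mathlib

open Matrix Finset

/-- Unbiasedness and variance bound for the barycentric loss estimator: the random
vector `g` equal to `(d/γ)(q_iᵀ f) Q⁻¹ q_i` with probability `γ/d` (for each `i`) and
`0` with probability `1 - γ` satisfies `E[g] = f` and `E[gᵀ Q g] ≤ L²R²d²/γ`. -/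
theorem barycentric_estimator
    {d : ℕ} (hd : 0 < d) (q : Fin d → (Fin d → ℝ)) (hq : LinearIndependent ℝ q)
    (R : ℝ) (hR : 0 < R) (hnorm : ∀ i, ∑ j, q i j ^ 2 ≤ R ^ 2)
    (Q : Matrix (Fin d) (Fin d) ℝ)
    (hQ : Q = ∑ i, Matrix.vecMulVec (q i) (q i))
    (f : Fin d → ℝ) (L : ℝ) (hL : 0 ≤ L) (hf : ∀ i, |q i ⬝ᵥ f| ≤ L * R)
    (γ : ℝ) (hγ0 : 0 < γ) (hγ1 : γ ≤ 1) :
    (∑ i, (γ / d) • (((d / γ) * (q i ⬝ᵥ f)) • (Q⁻¹ *ᵥ q i)) = f) ∧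
      (∑ i, (γ / d) * (((d / γ) * (q i ⬝ᵥ f)) ^ 2 *
          ((Q⁻¹ *ᵥ q i) ⬝ᵥ (Q *ᵥ (Q⁻¹ *ᵥ q i)))) ≤ L ^ 2 * R ^ 2 * d ^ 2 / γ) := by
  have hdR : (0:ℝ) < d := Nat.cast_pos.mpr hd
  have hdne : (d:ℝ) ≠ 0 := ne_of_gt hdR
  have hγne : γ ≠ 0 := ne_of_gt hγ0
  set M : Matrix (Fin d) (Fin d) ℝ := Matrix.of q with hM
  have hMq : ∀ i, M i = q i := fun i => rfl
  have hMu : IsUnit M := Matrix.linearIndependent_rows_iff_isUnit.mp hq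
  have hQM : Q = Mᵀ * M := by
    ext k l
    simp [hQ, Matrix.sum_apply, Matrix.vecMulVec_apply, Matrix.mul_apply, hM, mul_comm]
  have hQu : IsUnit Q := by
    rw [hQM]
    exact ((Matrix.isUnit_transpose M).mpr hMu).mul hMu
  have hinv : Q⁻¹ * Q = 1 := Matrix.nonsing_inv_mul Q ((Matrix.isUnit_iff_isUnit_det Q).mp hQu)
  have hinv2 : Q * Q⁻¹ = 1 := Matrix.mul_nonsing_inv Q ((Matrix.isUnit_iff_isUnit_det Q).mp hQu)
  -- Part 1
  have part1 : ∑ i, (γ / d) • (((d / γ) * (q i ⬝ᵥ f)) • (Q⁻¹ *ᵥ q i)) = f := by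
    have hsc : ∀ i, (γ / d) • (((d / γ) * (q i ⬝ᵥ f)) • (Q⁻¹ *ᵥ q i))
        = Q⁻¹ *ᵥ ((q i ⬝ᵥ f) • q i) := by
      intro i
      rw [Matrix.mulVec_smul, smul_smul]
      congr 1
      field_simp
    simp_rw [hsc]
    have hlin : ∑ i, Q⁻¹ *ᵥ ((q i ⬝ᵥ f) • q i) = Q⁻¹ *ᵥ (∑ i, (q i ⬝ᵥ f) • q i) := by
      simp_rw [← Matrix.mulVecLin_apply]
      exact (map_sum Q⁻¹.mulVecLin _ _).symm
    rw [hlin]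
    have hsum : ∑ i, (q i ⬝ᵥ f) • q i = Q *ᵥ f := by
      ext j
      simp only [Finset.sum_apply, Pi.smul_apply, smul_eq_mul, hQ, Matrix.mulVec,
        dotProduct, Matrix.sum_apply, Matrix.vecMulVec_apply, Finset.sum_mul,
        Finset.mul_sum]
      rw [Finset.sum_comm]
      apply Finset.sum_congr rfl; intro i _
      apply Finset.sum_congr rfl; intro k _
      ring
    rw [hsum, Matrix.mulVec_mulVec, hinv, Matrix.one_mulVec]
  refine ⟨part1, ?_⟩
  have hQps : Q.PosSemidef := by
    rw [hQM]
    exact Matrix.posSemidef_conjTranspose_mul_self M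
  have hinvps : Q⁻¹.PosSemidef := hQps.inv
  set t : Fin d → ℝ := fun i => (Q⁻¹ *ᵥ q i) ⬝ᵥ q i with ht
  have ht0 : ∀ i, 0 ≤ t i := by
    intro i
    have h := hinvps.dotProduct_mulVec_nonneg (q i)
    simp only [star_trivial] at h
    show 0 ≤ (Q⁻¹ *ᵥ q i) ⬝ᵥ q i
    rwa [dotProduct_comm]
  have hQQ : ∀ i, Q *ᵥ (Q⁻¹ *ᵥ q i) = q i := by
    intro i
    rw [Matrix.mulVec_mulVec, hinv2, Matrix.one_mulVec]
  have htr : ∑ i, t i = d := by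
    have h1 : ∑ i, t i = ∑ j, ∑ k, Q⁻¹ j k * Q k j := by
      simp only [ht, dotProduct, Matrix.mulVec, hQ, Matrix.sum_apply,
        Matrix.vecMulVec_apply, Finset.sum_mul, Finset.mul_sum]
      rw [Finset.sum_comm]
      refine Finset.sum_congr rfl fun j _ => ?_
      rw [Finset.sum_comm]
      refine Finset.sum_congr rfl fun k _ => ?_
      refine Finset.sum_congr rfl fun i _ => ?_
      ring
    have h2 : ∑ j, ∑ k, Q⁻¹ j k * Q k j = Matrix.trace (Q⁻¹ * Q) := by
      simp [Matrix.trace, Matrix.mul_apply, Matrix.diag]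
    rw [h1, h2, hinv, Matrix.trace_one]
    simp
  have hdg : (0:ℝ) ≤ d / γ := le_of_lt (div_pos hdR hγ0)
  calc ∑ i, (γ / d) * (((d / γ) * (q i ⬝ᵥ f)) ^ 2 *
          ((Q⁻¹ *ᵥ q i) ⬝ᵥ (Q *ᵥ (Q⁻¹ *ᵥ q i))))
      = ∑ i, (d / γ) * ((q i ⬝ᵥ f) ^ 2 * t i) := by
        refine Finset.sum_congr rfl fun i _ => ?_
        rw [hQQ i]
        show γ / ↑d * ((↑d / γ * (q i ⬝ᵥ f)) ^ 2 * t i) = ↑d / γ * ((q i ⬝ᵥ f) ^ 2 * t i)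
        field_simp
    _ ≤ ∑ i, (d / γ) * ((L * R) ^ 2 * t i) := by
        refine Finset.sum_le_sum fun i _ => ?_
        refine mul_le_mul_of_nonneg_left ?_ hdg
        refine mul_le_mul_of_nonneg_right ?_ (ht0 i)
        rw [← sq_abs]
        exact pow_le_pow_left₀ (abs_nonneg _) (hf i) 2
    _ = (d / γ) * ((L * R) ^ 2 * ∑ i, t i) := by
        rw [← Finset.mul_sum, ← Finset.mul_sum]
    _ = L ^ 2 * R ^ 2 * d ^ 2 / γ := by
        rw [htr]
        field_simp
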